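/- Let Ψ : 𝒜 → 𝕊 be a non-constant polynomial monogenic spinor, i.e. D_iΨ := Σ_{α=1}^{n+1} ε_α·L_{αi}Ψ = 0 for all i = 1,…,k. Then Ψ cannot depend only on the variables y_{rs} (1 ≤ r < s ≤ k) and x_{n+1,i} (i = 1,…,k); equivalently, any monogenic spinor Ψ with ∂_{x_{αi}}Ψ = 0 for all α = 1,…,n and i = 1,…,k is constant. -/

import Mathlib

open MvPolynomial

/-- Variables: the `x_{αi}` and the `y_{rs}` with `r < s`. -/
abbrev Var (n k : ℕ) := (Fin (n + 1) × Fin k) ⊕ {p : Fin k × Fin k // p.1 < p.2}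

/-- The weight of a variable: `1` for the `x`-variables, `2` for the `y`-variables. -/
def wvar (n k : ℕ) : Var n k → ℕ
  | Sum.inl _ => 1
  | Sum.inr _ => 2

/-- The signed derivative `∂_{y_{ij}}` (convention `y_{sr} = −y_{rs}`, `∂_{y_{ii}} = 0`). -/
noncomputable def pdYp {n k : ℕ} (i j : Fin k) (p : MvPolynomial (Var n k) ℂ) :
    MvPolynomial (Var n k) ℂ :=
  if h : i < j then pderiv (Sum.inr ⟨(i, j), h⟩) p
  else if h' : j < i then -pderiv (Sum.inr ⟨(j, i), h'⟩) p
  else 0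

/-- `L_{αi} = ∂_{x_{αi}} − ½ Σ_t x_{αt} ∂_{y_{it}}`. -/
noncomputable def Lop {n k : ℕ} (α : Fin (n + 1)) (i : Fin k)
    (p : MvPolynomial (Var n k) ℂ) : MvPolynomial (Var n k) ℂ :=
  pderiv (Sum.inl (α, i)) p -
    C (1 / 2 : ℂ) * ∑ t : Fin k, X (Sum.inl (α, t)) * pdYp i t p

/-- The `i`-th component `D_i = Σ_α ε_α · L_{αi}` of the `k`-Dirac operator, acting on
`𝕊`-valued polynomials on `𝒜` (the spinor space `𝕊 = ℂ^m` with Clifford multiplication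
by the matrices `ε α`). -/
noncomputable def Dop {n k m : ℕ} (ε : Fin (n + 1) → Matrix (Fin m) (Fin m) ℂ) (i : Fin k)
    (Ψ : Fin m → MvPolynomial (Var n k) ℂ) : Fin m → MvPolynomial (Var n k) ℂ :=
  fun u => ∑ α : Fin (n + 1), ∑ v : Fin m, C (ε α u v) * Lop α i (Ψ v)

lemma my_pderiv_comm {σ R : Type*} [CommSemiring R] (a b : σ) (p : MvPolynomial σ R) :
    pderiv a (pderiv b p) = pderiv b (pderiv a p) := by
  classical
  induction p using MvPolynomial.induction_on with
  | C c => simp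
  | add p q hp hq => simp [hp, hq]
  | mul_X p i hp =>
      have hax : ∀ c d : σ, pderiv c (pderiv d (X i) : MvPolynomial σ R) = 0 := by
        intro c d
        rcases eq_or_ne i d with h | h
        · subst h; simp
        · rw [pderiv_X_of_ne h, map_zero]
      simp only [pderiv_mul, map_add, hp, hax]
      ring

lemma my_coeff_pderiv {σ R : Type*} [CommSemiring R] (i : σ) (p : MvPolynomial σ R) (m : σ →₀ ℕ) :
    coeff m (pderiv i p) = (m i + 1 : ℕ) * coeff (m + Finsupp.single i 1) p := by
  classical
  induction p using MvPolynomial.induction_on' with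
  | monomial u a =>
      rw [pderiv_monomial, coeff_monomial, coeff_monomial]
      by_cases hu : u i = 0
      · have hne : u ≠ m + Finsupp.single i 1 := by
          intro h
          apply absurd hu
          rw [h]; simp
        rw [if_neg hne, mul_zero]
        split_ifs with h
        · rw [hu, Nat.cast_zero, mul_zero]
        · rfl
      · have hle : Finsupp.single i 1 ≤ u := by
          rw [Finsupp.single_le_iff]; omega
        have hiff : u - Finsupp.single i 1 = m ↔ u = m + Finsupp.single i 1 :=
          tsub_eq_iff_eq_add_of_le hle
        by_cases h : u = m + Finsupp.single i 1
        · rw [if_pos (hiff.mpr h), if_pos h, h]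
          simp [Finsupp.add_apply, Finsupp.single_apply, mul_comm]
        · rw [if_neg (fun hh => h (hiff.mp hh)), if_neg h, mul_zero]
  | add p q hp hq => simp [hp, hq, mul_add]

lemma eq_C_of_pderiv_zero {σ : Type*} {p : MvPolynomial σ ℂ} (h : ∀ i, pderiv i p = 0) :
    ∃ c, p = C c := by
  classical
  refine ⟨coeff 0 p, ?_⟩
  ext d
  rw [coeff_C]
  by_cases hd : d = 0
  · simp [hd]
  · rw [if_neg (fun h0 => hd h0.symm)]
    obtain ⟨i, hi⟩ : ∃ i, d i ≠ 0 := by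
      by_contra hcon
      push_neg at hcon
      exact hd (Finsupp.ext fun j => hcon j)
    have h0 := congrArg (coeff (d - Finsupp.single i 1)) (h i)
    rw [my_coeff_pderiv, coeff_zero] at h0
    have hle : Finsupp.single i 1 ≤ d := by rw [Finsupp.single_le_iff]; omega
    rw [tsub_add_cancel_of_le hle] at h0
    rcases mul_eq_zero.mp h0 with h' | h'
    · exfalso
      have hnz : ((d - Finsupp.single i 1 : σ →₀ ℕ) i + 1 : ℕ) ≠ 0 := Nat.succ_ne_zero _
      exact hnz (by exact_mod_cast h')
    · exact h'

lemma pdYp_zero {n k : ℕ} (i j : Fin k) : pdYp i j (0 : MvPolynomial (Var n k) ℂ) = 0 := by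
  unfold pdYp; split_ifs <;> simp

lemma pderiv_pdYp {n k : ℕ} (d : Var n k) (i j : Fin k) (p : MvPolynomial (Var n k) ℂ) :
    pderiv d (pdYp i j p) = pdYp i j (pderiv d p) := by
  unfold pdYp; split_ifs
  · rw [my_pderiv_comm]
  · rw [map_neg, my_pderiv_comm]
  · rw [map_zero]

lemma cancel {n k m : ℕ} (ε : Fin (n + 1) → Matrix (Fin m) (Fin m) ℂ)
    (hcl : ∀ α β, ε α * ε β + ε β * ε α =
      if α = β then (-2 : ℂ) • (1 : Matrix (Fin m) (Fin m) ℂ) else 0)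
    (α : Fin (n + 1)) (f : Fin m → MvPolynomial (Var n k) ℂ)
    (h : ∀ u, ∑ v, C (ε α u v) * f v = 0) : ∀ w, f w = 0 := by
  classical
  have h2 := hcl α α
  rw [if_pos rfl] at h2
  have hsq : ε α * ε α = -1 := by
    have h2' : (2 : ℂ) • (ε α * ε α) = (-2 : ℂ) • (1 : Matrix (Fin m) (Fin m) ℂ) := by
      rw [two_smul]; exact h2
    have h3 := congrArg (fun M : Matrix (Fin m) (Fin m) ℂ => ((2 : ℂ)⁻¹) • M) h2'
    simp only [smul_smul] at h3
    norm_num at h3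
    simpa [neg_smul, one_smul] using h3
  intro w
  have h0 : ∑ u : Fin m, C (ε α w u) * ∑ v, C (ε α u v) * f v = 0 := by
    simp [h]
  have h1 : ∑ u : Fin m, C (ε α w u) * ∑ v, C (ε α u v) * f v
      = ∑ v, C ((ε α * ε α) w v) * f v := by
    simp only [Finset.mul_sum, Matrix.mul_apply, map_sum, Finset.sum_mul]
    rw [Finset.sum_comm]
    refine Finset.sum_congr rfl fun v _ => Finset.sum_congr rfl fun u _ => ?_
    rw [← mul_assoc, ← map_mul]
  rw [h1, hsq] at h0
  have h4 : ∑ v, C ((-1 : Matrix (Fin m) (Fin m) ℂ) w v) * f v = -f w := by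
    simp [Matrix.neg_apply, Matrix.one_apply, apply_ite (C : ℂ → MvPolynomial (Var n k) ℂ),
      ite_mul]
  rw [h4, neg_eq_zero] at h0
  exact h0

/-- A monogenic spinor depending only on the variables `y_{rs}` and `x_{n+1,i}`
(equivalently, with `∂_{x_{αi}}Ψ = 0` for all `α = 1,…,n` and all `i`) is constant. -/
theorem monogenic_in_y_and_last_row_is_constant {n k m : ℕ} (hk : 2 ≤ k) (hn : 2 ≤ n)
    (ε : Fin (n + 1) → Matrix (Fin m) (Fin m) ℂ)
    (hcl : ∀ α β, ε α * ε β + ε β * ε α =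
      if α = β then (-2 : ℂ) • (1 : Matrix (Fin m) (Fin m) ℂ) else 0)
    (Ψ : Fin m → MvPolynomial (Var n k) ℂ)
    (hD : ∀ i : Fin k, Dop ε i Ψ = 0)
    (hx : ∀ (α : Fin (n + 1)), (α : ℕ) < n → ∀ (i : Fin k) (u : Fin m),
      MvPolynomial.pderiv (Sum.inl (α, i)) (Ψ u) = 0) :
    ∀ u : Fin m, ∃ c : ℂ, Ψ u = MvPolynomial.C c := by
  classical
  have hα0n : ((⟨0, by omega⟩ : Fin (n + 1)) : ℕ) < n := by simpa using by omega
  set α0 : Fin (n + 1) := ⟨0, by omega⟩ with hα0def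
  -- Step A: all y-derivatives of Ψ vanish
  have hpdY : ∀ (i t : Fin k) (v : Fin m), pdYp i t (Ψ v) = 0 := by
    intro i t
    have hLop : ∀ (α : Fin (n + 1)) (v : Fin m),
        pderiv (Sum.inl (α0, t) : Var n k) (Lop α i (Ψ v)) =
          if α = α0 then -(C (1 / 2 : ℂ)) * pdYp i t (Ψ v) else 0 := by
      intro α v
      have hΨ0 : pderiv (Sum.inl (α0, t) : Var n k) (Ψ v) = 0 := hx α0 hα0n t v
      unfold Lop
      rw [map_sub, my_pderiv_comm, hΨ0, map_zero, zero_sub, pderiv_C_mul, map_sum]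
      have hterm : ∀ t' : Fin k,
          pderiv (Sum.inl (α0, t) : Var n k) (X (Sum.inl (α, t')) * pdYp i t' (Ψ v)) =
            if α = α0 ∧ t' = t then pdYp i t' (Ψ v) else 0 := by
        intro t'
        rw [pderiv_mul, pderiv_pdYp, hΨ0, pdYp_zero, mul_zero, add_zero]
        by_cases hcond : α = α0 ∧ t' = t
        · obtain ⟨h1, h2⟩ := hcond
          subst h1; subst h2
          rw [pderiv_X_self, one_mul, if_pos ⟨rfl, rfl⟩]
        · rw [pderiv_X_of_ne, zero_mul, if_neg hcond]
          intro hXX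
          exact hcond (by simpa using hXX)
      rw [Finset.sum_congr rfl fun t' _ => hterm t']
      by_cases hα : α = α0
      · subst hα
        simp [Finset.sum_ite_eq', neg_mul]
      · simp [hα]
    have hsum : ∀ u, ∑ v, C (ε α0 u v) * pdYp i t (Ψ v) = 0 := by
      intro u
      have h0 : pderiv (Sum.inl (α0, t) : Var n k) (Dop ε i Ψ u) = 0 := by
        rw [congrFun (hD i) u]
        simp
      unfold Dop at h0
      rw [map_sum] at h0
      simp only [map_sum, pderiv_C_mul, hLop, mul_ite, mul_zero] at h0
      rw [Finset.sum_comm] at h0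
      simp only [Finset.sum_ite_eq', Finset.mem_univ, if_true] at h0
      have h0' : -(C (1 / 2 : ℂ)) * ∑ v, C (ε α0 u v) * pdYp i t (Ψ v) = 0 := by
        rw [Finset.mul_sum]
        rw [← h0]
        refine Finset.sum_congr rfl fun v _ => by ring
      rcases mul_eq_zero.mp h0' with h' | h'
      · exfalso
        rw [neg_eq_zero] at h'
        have : (1 / 2 : ℂ) = 0 := by
          have := (MvPolynomial.C_injective (Var n k) ℂ)
          exact this (by simpa using h')
        norm_num at this
      · exact h'
    intro v
    exact cancel ε hcl α0 _ hsum v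
  -- Step B: the last-row x-derivatives also vanish
  have hlast : ∀ (i : Fin k) (v : Fin m),
      pderiv (Sum.inl (Fin.last n, i) : Var n k) (Ψ v) = 0 := by
    intro i
    apply cancel ε hcl (Fin.last n)
    intro u
    have h0 := congrFun (hD i) u
    unfold Dop at h0
    have hL : ∀ (α : Fin (n + 1)) (v : Fin m),
        Lop α i (Ψ v) = pderiv (Sum.inl (α, i)) (Ψ v) := by
      intro α v
      unfold Lop
      simp [hpdY]
    simp only [hL] at h0
    rw [Fin.sum_univ_castSucc] at h0
    have hz : ∀ β : Fin n,
        ∑ v, C (ε β.castSucc u v) * pderiv (Sum.inl (β.castSucc, i) : Var n k) (Ψ v) = 0 := by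
      intro β
      have hβ : ((β.castSucc : Fin (n + 1)) : ℕ) < n := β.isLt
      simp [hx _ hβ]
    rw [Finset.sum_congr rfl fun β _ => hz β, Finset.sum_const_zero, zero_add] at h0
    simpa using h0
  -- Step C: conclude
  intro u
  apply eq_C_of_pderiv_zero
  intro b
  match b with
  | Sum.inl (α, i) =>
      by_cases hα : (α : ℕ) < n
      · exact hx α hα i u
      · have hαl : α = Fin.last n := by
          have := α.isLt
          apply Fin.ext
          simp only [Fin.val_last]
          omega
        rw [hαl]
        exact hlast i u
  | Sum.inr ⟨(r, s), hrs⟩ =>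
      have h := hpdY r s u
      unfold pdYp at h
      rw [dif_pos hrs] at h
      exact h
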